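/- In Example 1 with true model x = h*θ + n + n_c where n, n_c are independent zero-mean Gaussians with covariances Σ and Σ_c, the asymptotic ZZB for the misspecified model (assuming noise covariance Σ only) equals (h*ᵀΣ⁻¹h* + h*ᵀΣ⁻¹Σ_cΣ⁻¹h*)/(h*ᵀΣ⁻¹h*)², which is greater than or equal to the matched-model bound 1/(h*ᵀ(Σ+Σ_c)⁻¹h*). -/

import Mathlib

open Matrix

private lemma posdef_pos {K : ℕ} {M : Matrix (Fin K) (Fin K) ℝ} (hM : M.PosDef)
    {x : Fin K → ℝ} (hx : x ≠ 0) : 0 < x ⬝ᵥ M.mulVec x := by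
  have := hM.dotProduct_mulVec_pos hx
  simpa using this

/-- Cauchy–Schwarz for a symmetric positive definite matrix. -/
private lemma cs_posdef {K : ℕ} {A : Matrix (Fin K) (Fin K) ℝ} (hA : A.PosDef)
    (hAs : Aᵀ = A) (x y : Fin K → ℝ) :
    (x ⬝ᵥ A.mulVec y) ^ 2 ≤ (x ⬝ᵥ A.mulVec x) * (y ⬝ᵥ A.mulVec y) := by
  have hswap : ∀ u v : Fin K → ℝ, u ⬝ᵥ A.mulVec v = v ⬝ᵥ A.mulVec u := by
    intro u v
    rw [Matrix.dotProduct_mulVec, ← Matrix.mulVec_transpose, hAs, dotProduct_comm]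
  have key : ∀ t : ℝ, 0 ≤ (y ⬝ᵥ A.mulVec y) * (t * t)
      + (2 * (x ⬝ᵥ A.mulVec y)) * t + (x ⬝ᵥ A.mulVec x) := by
    intro t
    have hps := hA.posSemidef.dotProduct_mulVec_nonneg (x + t • y)
    have h0 : 0 ≤ (x + t • y) ⬝ᵥ A.mulVec (x + t • y) := by simpa using hps
    have hexp : (x + t • y) ⬝ᵥ A.mulVec (x + t • y)
        = (y ⬝ᵥ A.mulVec y) * (t * t)
          + (2 * (x ⬝ᵥ A.mulVec y)) * t + (x ⬝ᵥ A.mulVec x) := by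
      simp only [Matrix.mulVec_add, Matrix.mulVec_smul, dotProduct_add, add_dotProduct,
        dotProduct_smul, smul_dotProduct, smul_eq_mul, hswap y x]
      ring
    linarith [hexp ▸ h0]
  have hd := discrim_le_zero key
  rw [discrim] at hd
  nlinarith [hd]

/-- Example 1: the asymptotic ZZB for the misspecified model (assumed noise
covariance `Σ` when the true covariance is `Σ + Σ_c`) equals
`(h*ᵀΣ⁻¹h* + h*ᵀΣ⁻¹Σ_cΣ⁻¹h*)/(h*ᵀΣ⁻¹h*)²`, and it is at least the
matched-model bound `1/(h*ᵀ(Σ+Σ_c)⁻¹h*)`. -/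
theorem zzb_example1_mismatch_ge_matched {K : ℕ}
    (Cov Covc : Matrix (Fin K) (Fin K) ℝ)
    (hs : Cov.IsSymm) (hsc : Covc.IsSymm) (hpd : Cov.PosDef) (hpdc : Covc.PosDef)
    (hstar : Fin K → ℝ) (hne : hstar ≠ 0) (γ : ℝ)
    (hγ : γ = (hstar ⬝ᵥ Cov⁻¹.mulVec hstar)
        / (2 * Real.sqrt (hstar ⬝ᵥ Cov⁻¹.mulVec hstar
            + hstar ⬝ᵥ Cov⁻¹.mulVec (Covc.mulVec (Cov⁻¹.mulVec hstar))))) :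
    1 / (4 * γ ^ 2)
      = (hstar ⬝ᵥ Cov⁻¹.mulVec hstar
          + hstar ⬝ᵥ Cov⁻¹.mulVec (Covc.mulVec (Cov⁻¹.mulVec hstar)))
        / (hstar ⬝ᵥ Cov⁻¹.mulVec hstar) ^ 2
    ∧ 1 / (hstar ⬝ᵥ (Cov + Covc)⁻¹.mulVec hstar)
        ≤ (hstar ⬝ᵥ Cov⁻¹.mulVec hstar
            + hstar ⬝ᵥ Cov⁻¹.mulVec (Covc.mulVec (Cov⁻¹.mulVec hstar)))
          / (hstar ⬝ᵥ Cov⁻¹.mulVec hstar) ^ 2 := by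
  have hpi : Cov⁻¹.PosDef := hpd.inv
  set u : Fin K → ℝ := Cov⁻¹.mulVec hstar with hu
  set s : ℝ := hstar ⬝ᵥ u with hsdef
  set N : ℝ := s + hstar ⬝ᵥ Cov⁻¹.mulVec (Covc.mulVec u) with hN
  have hspos : 0 < s := posdef_pos hpi hne
  have hsinv : (Cov⁻¹)ᵀ = Cov⁻¹ := by
    rw [Matrix.transpose_nonsing_inv, hs.eq]
  have hune : u ≠ 0 := by
    intro h0
    have := hspos
    rw [hsdef, h0] at this
    simp at this
  set A : Matrix (Fin K) (Fin K) ℝ := Cov + Covc with hA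
  have hApd : A.PosDef := hpd.add hpdc
  have hAsymm : Aᵀ = A := by
    rw [hA, Matrix.transpose_add, hs.eq, hsc.eq]
  have hCovu : Cov.mulVec u = hstar := by
    rw [hu, Matrix.mulVec_mulVec,
      Matrix.mul_nonsing_inv _ (isUnit_iff_ne_zero.mpr hpd.det_pos.ne'), Matrix.one_mulVec]
  have hterm2 : hstar ⬝ᵥ Cov⁻¹.mulVec (Covc.mulVec u) = u ⬝ᵥ Covc.mulVec u := by
    rw [Matrix.dotProduct_mulVec, ← Matrix.mulVec_transpose, hsinv]
  have hNA : N = u ⬝ᵥ A.mulVec u := by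
    rw [hN, hA, Matrix.add_mulVec, dotProduct_add, hCovu, hterm2, hsdef,
      dotProduct_comm hstar u]
  have hNpos : 0 < N := hNA ▸ posdef_pos hApd hune
  constructor
  · -- equality
    rw [hγ]
    have hsq : Real.sqrt N ^ 2 = N := Real.sq_sqrt hNpos.le
    have key : 4 * (s / (2 * Real.sqrt N)) ^ 2 = s ^ 2 / N := by
      rw [div_pow, mul_pow, hsq]
      field_simp
      ring
    rw [key, one_div_div]
  · -- inequality
    have hApdinv : A⁻¹.PosDef := hApd.inv
    have hq : 0 < hstar ⬝ᵥ A⁻¹.mulVec hstar := posdef_pos hApdinv hne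
    have hcs := cs_posdef hApd hAsymm (A⁻¹.mulVec hstar) u
    have hAAinv : A.mulVec (A⁻¹.mulVec hstar) = hstar := by
      rw [Matrix.mulVec_mulVec,
        Matrix.mul_nonsing_inv _ (isUnit_iff_ne_zero.mpr hApd.det_pos.ne'), Matrix.one_mulVec]
    have hx_Au : (A⁻¹.mulVec hstar) ⬝ᵥ A.mulVec u = s := by
      rw [Matrix.dotProduct_mulVec (A⁻¹.mulVec hstar), ← Matrix.mulVec_transpose,
        hAsymm, hAAinv]
    have hx_Ax : (A⁻¹.mulVec hstar) ⬝ᵥ A.mulVec (A⁻¹.mulVec hstar)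
        = hstar ⬝ᵥ A⁻¹.mulVec hstar := by
      rw [hAAinv, dotProduct_comm]
    rw [hx_Au, hx_Ax, ← hNA] at hcs
    rw [div_le_div_iff₀ hq (by positivity)]
    calc 1 * s ^ 2 = s ^ 2 := one_mul _
      _ ≤ (hstar ⬝ᵥ A⁻¹.mulVec hstar) * N := hcs
      _ = N * (hstar ⬝ᵥ A⁻¹.mulVec hstar) := mul_comm _ _
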